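/- Let B = {c_1, …, c_L} ⊂ ℝ with c_1 < ⋯ < c_L and σ > 0. Then ∫_ℝ (argmin_{x ∈ B} |σz − x|) · z · e^{−z²/2} dz/√(2π) = (1/√(2π)) Σ_{i=2}^L (c_i − c_{i-1}) · exp(−(c_i + c_{i-1})²/(8σ²)). -/

import Mathlib

open MeasureTheory

open Filter in
private lemma integrable_zexp' : Integrable (fun z : ℝ => z * Real.exp (-z^2/2)) := by
  have := integrable_mul_exp_neg_mul_sq (b := (1:ℝ)/2) (by norm_num)
  convert this using 2 with z
  ring_nf

open Filter in
private lemma tendsto_nexp_top' :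
    Tendsto (fun z : ℝ => -Real.exp (-z^2/2)) atTop (nhds 0) := by
  rw [show (0:ℝ) = -0 by ring]
  apply Filter.Tendsto.neg
  apply Real.tendsto_exp_atBot.comp
  apply Filter.Tendsto.atBot_div_const (by norm_num : (0:ℝ) < 2)
  have h := tendsto_neg_atTop_atBot.comp
    (tendsto_pow_atTop (α := ℝ) (n := 2) (by norm_num))
  exact h.congr (fun x => by simp [Function.comp])

private lemma hasDerivAt_nexp' (x : ℝ) :
    HasDerivAt (fun z : ℝ => -Real.exp (-z^2/2)) (x * Real.exp (-x^2/2)) x := by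
  have h1 : HasDerivAt (fun z : ℝ => -z^2/2) (-x) x := by
    have := ((hasDerivAt_pow 2 x).neg.div_const 2)
    refine HasDerivAt.congr_deriv this ?_
    push_cast
    ring
  have := (h1.exp).neg
  refine HasDerivAt.congr_deriv this ?_
  ring

private lemma integral_Ioi_zexp' (t : ℝ) :
    ∫ z in Set.Ioi t, z * Real.exp (-z^2/2) = Real.exp (-t^2/2) := by
  have := integral_Ioi_of_hasDerivAt_of_tendsto' (a := t)
    (fun x _ => hasDerivAt_nexp' x) (integrable_zexp'.integrableOn) tendsto_nexp_top'
  simpa using this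

open Filter in
private lemma tendsto_nexp_bot' :
    Tendsto (fun z : ℝ => -Real.exp (-z^2/2)) atBot (nhds 0) := by
  have := tendsto_nexp_top'.comp tendsto_neg_atBot_atTop
  exact this.congr (fun x => by simp [Function.comp, neg_sq])

private lemma integral_zexp' : ∫ z : ℝ, z * Real.exp (-z^2/2) = 0 := by
  have := integral_of_hasDerivAt_of_tendsto (fun x => hasDerivAt_nexp' x)
    integrable_zexp' tendsto_nexp_bot' tendsto_nexp_top'
  simpa using this

private lemma abs_lt_abs_left' {a b y : ℝ} (hab : a < b) (h : y < (a+b)/2) :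
    |y - a| < |y - b| := by
  have hyb : y - b < 0 := by linarith
  rw [abs_of_neg hyb, abs_lt]
  constructor <;> linarith

private lemma abs_lt_abs_right' {a b y : ℝ} (hab : a < b) (h : (a+b)/2 < y) :
    |y - b| < |y - a| := by
  have hya : 0 < y - a := by linarith
  rw [abs_of_pos hya, abs_lt]
  constructor <;> linarith

private lemma nearest_rep' (L : ℕ) (c : ℕ → ℝ) (hc : ∀ i j, i < j → j < L → c i < c j)
    (N : ℝ → ℝ) (hNmem : ∀ y, ∃ i < L, N y = c i)
    (hNmin : ∀ y, ∀ i < L, |y - N y| ≤ |y - c i|) (y : ℝ)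
    (hy : ∀ i ∈ Finset.Ico 1 L, y ≠ (c i + c (i-1))/2) :
    N y = c 0 + ∑ i ∈ Finset.Ico 1 L,
      (if (c i + c (i-1))/2 < y then c i - c (i-1) else 0) := by
  obtain ⟨j, hj, hNj⟩ := hNmem y
  have key : ∀ i ∈ Finset.Ico 1 L, ((c i + c (i-1))/2 < y ↔ i ≤ j) := by
    intro i hi
    rw [Finset.mem_Ico] at hi
    obtain ⟨hi1, hiL⟩ := hi
    constructor
    · intro hmy
      by_contra hij
      push_neg at hij
      have hcj : c j ≤ c (i-1) := by
        rcases eq_or_lt_of_le (by omega : j ≤ i - 1) with h | h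
        · rw [h]
        · exact le_of_lt (hc _ _ h (by omega))
      have hci : c (i-1) < c i := hc _ _ (by omega) hiL
      have h1 : (c j + c i)/2 < y := by linarith
      have h2 := abs_lt_abs_right' (hc j i hij hiL) h1
      have hm := hNmin y i hiL
      rw [hNj] at hm
      linarith
    · intro hij
      by_contra hmy
      push_neg at hmy
      have hne := hy i (Finset.mem_Ico.mpr ⟨hi1, hiL⟩)
      have hlt : y < (c i + c (i-1))/2 := lt_of_le_of_ne hmy hne
      have hij' : i - 1 < j := by omega
      have hcj : c i ≤ c j := by
        rcases eq_or_lt_of_le hij with h | h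
        · rw [h]
        · exact le_of_lt (hc _ _ h hj)
      have h1 : y < (c (i-1) + c j)/2 := by linarith
      have h2 := abs_lt_abs_left' (hc _ _ hij' hj) h1
      have hm := hNmin y (i-1) (by omega)
      rw [hNj] at hm
      linarith
  rw [Finset.sum_congr rfl (fun i hi => if_congr (key i hi) rfl rfl)]
  have hsum : ∑ i ∈ Finset.Ico 1 L, (if i ≤ j then c i - c (i-1) else 0)
      = ∑ i ∈ Finset.Ico 1 (j+1), (c i - c (i-1)) := by
    rw [← Finset.sum_filter]
    apply Finset.sum_congr _ (fun _ _ => rfl)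
    ext i
    simp only [Finset.mem_filter, Finset.mem_Ico]
    omega
  rw [hsum, Finset.sum_Ico_eq_sum_range]
  simp only [Nat.add_sub_cancel]
  have htel : ∑ i ∈ Finset.range j, (c (1+i) - c (1+i-1)) = c j - c 0 := by
    have := Finset.sum_range_sub (f := c) j
    rw [← this]
    apply Finset.sum_congr rfl
    intro i _
    simp [Nat.add_comm]
  rw [htel, hNj]
  ring

/-- Gaussian average of the nearest lattice point times `z` (a Stein-type
identity): for `B = {c₀ < c₁ < ⋯ < c_{L-1}}` and any nearest-point selector `N`,
`∫ N(σz) z e^{-z²/2} dz/√(2π)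
  = (1/√(2π)) Σ_{i=1}^{L-1} (cᵢ - c_{i-1}) exp(-(cᵢ + c_{i-1})²/(8σ²))`. -/
theorem gaussian_nearest_point_stein
    (L : ℕ) (hL : 1 ≤ L) (c : ℕ → ℝ)
    (hc : ∀ i j, i < j → j < L → c i < c j)
    (σ : ℝ) (hσ : 0 < σ)
    (N : ℝ → ℝ)
    (hNmem : ∀ y, ∃ i < L, N y = c i)
    (hNmin : ∀ y, ∀ i < L, |y - N y| ≤ |y - c i|) :
    ∫ z : ℝ, N (σ * z) * z * (Real.exp (-z ^ 2 / 2) / Real.sqrt (2 * Real.pi))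
      = (1 / Real.sqrt (2 * Real.pi)) * ∑ i ∈ Finset.Ico 1 L,
          (c i - c (i - 1)) * Real.exp (-(c i + c (i - 1)) ^ 2 / (8 * σ ^ 2)) := by
  set S := Real.sqrt (2 * Real.pi) with hS
  set E : ℝ → ℝ := fun z => Real.exp (-z^2/2) with hE
  -- step 1: pull out the constant 1/S
  have step1 : (∫ z : ℝ, N (σ * z) * z * (E z / S))
      = (∫ z : ℝ, N (σ * z) * z * E z) / S := by
    simp_rw [← mul_div_assoc]
    exact integral_div S _
  -- the bad set of midpoints
  set bad : Finset ℝ := (Finset.Ico 1 L).image (fun i => (c i + c (i-1))/2/σ) with hbad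
  have hbadnull : ∀ᵐ z : ℝ, z ∉ (bad : Set ℝ) :=
    compl_mem_ae_iff.mpr (bad.measure_zero volume)
  -- step 2: a.e. replace N by the explicit step function
  have step2 : (∫ z : ℝ, N (σ * z) * z * E z)
      = ∫ z : ℝ, (c 0 + ∑ i ∈ Finset.Ico 1 L,
          (if (c i + c (i-1))/2 < σ*z then c i - c (i-1) else 0)) * z * E z := by
    apply integral_congr_ae
    filter_upwards [hbadnull] with z hz
    have hy : ∀ i ∈ Finset.Ico 1 L, σ*z ≠ (c i + c (i-1))/2 := by
      intro i hi h
      apply hz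
      simp only [hbad, Finset.coe_image, Set.mem_image, Finset.mem_coe]
      exact ⟨i, hi, by field_simp; linarith⟩
    rw [nearest_rep' L c hc N hNmem hNmin (σ*z) hy]
  -- step 3: expand pointwise into indicator form
  have expand : ∀ z : ℝ, (c 0 + ∑ i ∈ Finset.Ico 1 L,
        (if (c i + c (i-1))/2 < σ*z then c i - c (i-1) else 0)) * z * E z
      = c 0 * (z * E z) + ∑ i ∈ Finset.Ico 1 L,
          Set.indicator (Set.Ioi ((c i + c (i-1))/2/σ))
            (fun w => (c i - c (i-1)) * (w * E w)) z := by
    intro z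
    simp only [Set.indicator_apply, Set.mem_Ioi]
    rw [add_mul, add_mul, Finset.sum_mul, Finset.sum_mul]
    congr 1
    · ring
    · apply Finset.sum_congr rfl
      intro i _
      rw [ite_mul, ite_mul, zero_mul, zero_mul]
      refine if_congr ?_ (by ring) rfl
      rw [div_lt_iff₀ hσ]
      constructor <;> intro h <;> linarith
  have step3 : (∫ z : ℝ, (c 0 + ∑ i ∈ Finset.Ico 1 L,
        (if (c i + c (i-1))/2 < σ*z then c i - c (i-1) else 0)) * z * E z)
      = ∑ i ∈ Finset.Ico 1 L,
          (c i - c (i - 1)) * Real.exp (-(c i + c (i - 1)) ^ 2 / (8 * σ ^ 2)) := by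
    simp_rw [expand]
    rw [integral_add (integrable_zexp'.const_mul _)
      (integrable_finset_sum _ (fun i _ =>
        ((integrable_zexp'.const_mul _).indicator measurableSet_Ioi))),
      MeasureTheory.integral_const_mul, integral_zexp', mul_zero, zero_add,
      integral_finset_sum _ (fun i _ =>
        ((integrable_zexp'.const_mul _).indicator measurableSet_Ioi))]
    apply Finset.sum_congr rfl
    intro i _
    rw [integral_indicator measurableSet_Ioi, MeasureTheory.integral_const_mul,
      integral_Ioi_zexp']
    congr 1
    have h4 : ((c i + c (i-1))/2/σ)^2 = (c i + c (i-1))^2/(4*σ^2) := by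
      field_simp
      ring
    rw [h4]
    field_simp
    ring_nf
  rw [step1, step2, step3]
  ring
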